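/- arXiv:math/0312492 — 2 statements merged into one kernel-verified Lean document; each statement's English description precedes it below -/
import Mathlib

section
/- Let h, d, n be positive integers with h ≡ 0 (mod 10), let Ω : {1,2,…} → {0,1} be a sequence, and let k ≥ 1 satisfy Ω(k) = 1. If a group G satisfies the identity w_{Ω,k} ≡ 1, then the quasiidentity x^{q_k} = 1 → [x,y] = 1 holds in G; that is, every element x ∈ G with x^{q_k} = 1 commutes with every element of G. -/
open scoped commutatorElement

/-- `qSeq k = (p₁ p₂ ⋯ p_k)^k` where `pᵢ` is the `i`-th prime. -/
noncomputable def qSeq (k : ℕ) : ℕ := (∏ i ∈ Finset.range k, Nat.nth Nat.Prime i) ^ k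

/-- The signs `ε_j`: `+1` for `j ≡ 1,2,3,5,6 (mod 10)` and `-1` for `j ≡ 4,7,8,9,0 (mod 10)`. -/
def epsSign (j : ℕ) : ℤ :=
  if j % 10 = 1 ∨ j % 10 = 2 ∨ j % 10 = 3 ∨ j % 10 = 5 ∨ j % 10 = 6 then 1 else -1

/-- `v_k(x,y) = [[x^d, y^d]^d, x^(d·q_k)]`. -/
noncomputable def vWord (d k : ℕ) {G : Type*} [Group G] (x y : G) : G :=
  ⁅⁅x ^ d, y ^ d⁆ ^ d, x ^ (d * qSeq k)⁆

/-- `w_{Ω,k}(x,y) = [x,y]^{Ω(k)+ε₁} v_k^{d^k n+1} [x,y]^{ε₂} v_k^{d^k n+2} ⋯ [x,y]^{ε_h} v_k^{d^k n+h}`,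
written as the ordered product over `j = 1, …, h` (index `i = j - 1`). -/
noncomputable def wWord (h d n : ℕ) (Ω : ℕ → ℕ) (k : ℕ) {G : Type*} [Group G] (x y : G) : G :=
  ((List.range h).map (fun i =>
    ⁅x, y⁆ ^ ((if i = 0 then (Ω k : ℤ) else 0) + epsSign (i + 1)) *
      vWord d k x y ^ (d ^ k * n + (i + 1)))).prod

lemma prod_zpow {G : Type*} [Group G] (c : G) (f : ℕ → ℤ) (h : ℕ) :
    ((List.range h).map (fun i => c ^ f i)).prod = c ^ (∑ i ∈ Finset.range h, f i) := by
  induction h with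
  | zero => simp
  | succ m ih => rw [List.range_succ, Finset.sum_range_succ]; simp [ih, zpow_add]

lemma sum_eps (m : ℕ) : ∑ i ∈ Finset.range (10 * m), epsSign (i + 1) = 0 := by
  induction m with
  | zero => simp
  | succ m ih =>
    have : 10 * (m + 1) = 10 * m + 1 + 1 + 1 + 1 + 1 + 1 + 1 + 1 + 1 + 1 := by ring
    rw [this]
    simp only [Finset.sum_range_succ, ih]
    simp [epsSign, Nat.add_mod, Nat.mul_mod_right]

/-- Let `h, d, n` be positive with `h ≡ 0 (mod 10)`, let `Ω` be a `{0,1}`-valued sequence and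
`k ≥ 1` with `Ω(k) = 1`. In any group satisfying the identity `w_{Ω,k} ≡ 1`, the quasiidentity
`x^{q_k} = 1 → [x,y] = 1` holds: every `x` with `x^{q_k} = 1` commutes with every element. -/
theorem stmt3 (h d n : ℕ) (hh : 0 < h) (hd : 0 < d) (hn : 0 < n) (h10 : h % 10 = 0)
    (Ω : ℕ → ℕ) (hΩ : ∀ j, 1 ≤ j → Ω j = 0 ∨ Ω j = 1)
    (k : ℕ) (hk : 1 ≤ k) (hΩk : Ω k = 1)
    (G : Type*) [Group G]
    (hid : ∀ x y : G, wWord h d n Ω k x y = 1) :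
    ∀ x : G, x ^ qSeq k = 1 → ∀ y : G, ⁅x, y⁆ = 1 := by
  intro x hx y
  have hv : vWord d k x y = 1 := by
    have : x ^ (d * qSeq k) = 1 := by
      rw [mul_comm, pow_mul, hx, one_pow]
    simp [vWord, this]
  have hw := hid x y
  rw [wWord] at hw
  simp only [hv, one_pow, mul_one] at hw
  rw [prod_zpow ⁅x, y⁆ (fun i => (if i = 0 then (Ω k : ℤ) else 0) + epsSign (i + 1)) h] at hw
  have hs : ∑ i ∈ Finset.range h, ((if i = 0 then (Ω k : ℤ) else 0) + epsSign (i + 1)) = 1 := by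
    rw [Finset.sum_add_distrib]
    obtain ⟨m, hm⟩ : ∃ m, h = 10 * m := ⟨h / 10, by omega⟩
    rw [hm, sum_eps]
    have hm0 : 0 < m := by omega
    rw [Finset.sum_ite_eq' (Finset.range (10 * m)) 0 (fun _ => (Ω k : ℤ))]
    simp [Finset.mem_range, hΩk]
    omega
  rw [hs, zpow_one] at hw
  exact hw
end

section
/- Let h, d, n be positive integers with h ≡ 0 (mod 10), and let Ω₁, Ω₂ : {1,2,…} → {0,1} be sequences with Ω₁(k₀) ≠ Ω₂(k₀) for some k₀ ≥ 1. Then in the free group F of rank 2, the subgroup generated by all values w_{Ω₁,k}(X,Y) and w_{Ω₂,k}(X,Y), where k ≥ 1 and X, Y range over F, equals the commutator (derived) subgroup of F. -/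
open scoped commutatorElement

lemma wWord_mem_commutator' (h d n : ℕ) (Ω : ℕ → ℕ) (k : ℕ) {G : Type*} [Group G] (x y : G) :
    wWord h d n Ω k x y ∈ commutator G := by
  apply Subgroup.list_prod_mem
  intro g hg
  simp only [List.mem_map] at hg
  obtain ⟨i, _, rfl⟩ := hg
  have hc : ⁅x, y⁆ ∈ commutator G :=
    Subgroup.commutator_mem_commutator (Subgroup.mem_top x) (Subgroup.mem_top y)
  have hv : vWord d k x y ∈ commutator G :=
    Subgroup.commutator_mem_commutator (Subgroup.mem_top _) (Subgroup.mem_top _)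
  exact mul_mem (zpow_mem hc _) (pow_mem hv _)

lemma wWord_mul_inv' (h d n : ℕ) (hh : 0 < h) (Ω₁ Ω₂ : ℕ → ℕ) (k : ℕ)
    {G : Type*} [Group G] (x y : G) :
    wWord h d n Ω₁ k x y * (wWord h d n Ω₂ k x y)⁻¹ = ⁅x, y⁆ ^ ((Ω₁ k : ℤ) - Ω₂ k) := by
  obtain ⟨m, rfl⟩ := Nat.exists_eq_succ_of_ne_zero hh.ne'
  unfold wWord
  rw [List.range_succ_eq_map]
  simp only [List.map_cons, List.prod_cons, List.map_map, Function.comp_def,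
    Nat.succ_ne_zero, if_neg, if_pos, if_true, if_false, Nat.succ_eq_add_one, zero_add]
  set c := ⁅x, y⁆
  set v := vWord d k x y
  set T := ((List.range m).map (fun i =>
    c ^ ((0 : ℤ) + epsSign (i + 1 + 1)) * v ^ (d ^ k * n + (i + 1 + 1)))).prod
  rw [sub_eq_add_neg, zpow_add, zpow_add, zpow_add]
  group

/-- Let `h, d, n` be positive with `h ≡ 0 (mod 10)` and let `Ω₁, Ω₂` be `{0,1}`-valued sequences
with `Ω₁(k₀) ≠ Ω₂(k₀)` for some `k₀ ≥ 1`. In the free group of rank 2, the subgroup generated by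
all values `w_{Ω₁,k}(X,Y)` and `w_{Ω₂,k}(X,Y)` (`k ≥ 1`) equals the commutator subgroup. -/
theorem stmt10 (h d n : ℕ) (hh : 0 < h) (hd : 0 < d) (hn : 0 < n) (h10 : h % 10 = 0)
    (Ω₁ Ω₂ : ℕ → ℕ)
    (hΩ₁ : ∀ k, 1 ≤ k → Ω₁ k = 0 ∨ Ω₁ k = 1)
    (hΩ₂ : ∀ k, 1 ≤ k → Ω₂ k = 0 ∨ Ω₂ k = 1)
    (k₀ : ℕ) (hk₀ : 1 ≤ k₀) (hne : Ω₁ k₀ ≠ Ω₂ k₀) :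
    Subgroup.closure {g : FreeGroup (Fin 2) |
        ∃ k, 1 ≤ k ∧ ∃ X Y : FreeGroup (Fin 2),
          g = wWord h d n Ω₁ k X Y ∨ g = wWord h d n Ω₂ k X Y} =
      commutator (FreeGroup (Fin 2)) := by
  set S := {g : FreeGroup (Fin 2) |
      ∃ k, 1 ≤ k ∧ ∃ X Y : FreeGroup (Fin 2),
        g = wWord h d n Ω₁ k X Y ∨ g = wWord h d n Ω₂ k X Y} with hS
  apply le_antisymm
  · rw [Subgroup.closure_le]
    rintro g ⟨k, hk, X, Y, (rfl | rfl)⟩ <;> exact wWord_mem_commutator' h d n _ k X Y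
  · rw [commutator_def]
    rw [Subgroup.commutator_le]
    intro x _ y _
    have h1 : wWord h d n Ω₁ k₀ x y ∈ Subgroup.closure S :=
      Subgroup.subset_closure ⟨k₀, hk₀, x, y, Or.inl rfl⟩
    have h2 : wWord h d n Ω₂ k₀ x y ∈ Subgroup.closure S :=
      Subgroup.subset_closure ⟨k₀, hk₀, x, y, Or.inr rfl⟩
    have key := wWord_mul_inv' h d n hh Ω₁ Ω₂ k₀ x y
    rcases hΩ₁ k₀ hk₀ with e1 | e1 <;> rcases hΩ₂ k₀ hk₀ with e2 | e2 <;>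
      rw [e1, e2] at key hne
    · exact absurd rfl hne
    · -- exponent 0 - 1 = -1
      have : ⁅x, y⁆ = (wWord h d n Ω₁ k₀ x y * (wWord h d n Ω₂ k₀ x y)⁻¹)⁻¹ := by
        rw [key]; norm_num
      rw [this]
      exact inv_mem (mul_mem h1 (inv_mem h2))
    · have : ⁅x, y⁆ = wWord h d n Ω₁ k₀ x y * (wWord h d n Ω₂ k₀ x y)⁻¹ := by
        rw [key]; norm_num
      rw [this]
      exact mul_mem h1 (inv_mem h2)
    · exact absurd rfl hne
end
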